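/- Let i ∈ N be a buyer and F ⊆ E_i. Then the function X ↦ f_{w,d}( E_X \ (E_i \ F) ) is monotone submodular on N (as a function of X ⊆ N). -/
import Mathlib


open Finset

noncomputable section

namespace TwoSidedMarket

variable {B S : Type*} [Fintype B] [Fintype S] [DecidableEq B] [DecidableEq S]

/-- A function `f` on subsets of a ground set `G` is monotone submodular:
`f ∅ = 0`, monotone on subsets of `G`, and submodular on subsets of `G`. -/
def IsMonoSubmodular {α : Type*} [DecidableEq α] (G : Finset α) (f : Finset α → ℝ) : Prop :=
  f ∅ = 0 ∧ (∀ A B : Finset α, A ⊆ B → B ⊆ G → f A ≤ f B) ∧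
    ∀ A B : Finset α, A ⊆ G → B ⊆ G → f (A ∩ B) + f (A ∪ B) ≤ f A + f B

/-- Monotone submodular, without the requirement of vanishing at `∅`. -/
def IsMonoSubmodularWeak {α : Type*} [DecidableEq α] (G : Finset α) (f : Finset α → ℝ) : Prop :=
  (∀ A B : Finset α, A ⊆ B → B ⊆ G → f A ≤ f B) ∧
    ∀ A B : Finset α, A ⊆ G → B ⊆ G → f (A ∩ B) + f (A ∪ B) ≤ f A + f B

/-- `E_i`: the edges of `E` incident to buyer `i`. -/
def Ei (E : Finset (B × S)) (i : B) : Finset (B × S) := E.filter fun e => e.1 = i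

/-- `E_j`: the edges of `E` incident to seller `j`. -/
def Ej (E : Finset (B × S)) (j : S) : Finset (B × S) := E.filter fun e => e.2 = j

/-- `E_X`: the edges of `E` incident to some buyer in `X`. -/
def EX (E : Finset (B × S)) (X : Finset B) : Finset (B × S) := E.filter fun e => e.1 ∈ X

/-- `N_F`: the buyers incident to some edge of `F`. -/
def NF (F : Finset (B × S)) : Finset B := F.image Prod.fst

/-- `x(F) = Σ_{e ∈ F} x e`. -/
def vsum (x : B × S → ℝ) (F : Finset (B × S)) : ℝ := ∑ e ∈ F, x e

/-- Membership `w ∈ P = ⊕_j P_j`: `w` is nonnegative, supported on `E`, and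
`w|_{E_j} ∈ P_j` for every seller `j`. -/
def memP (E : Finset (B × S)) (fj : S → Finset (B × S) → ℝ) (w : B × S → ℝ) : Prop :=
  (∀ e, 0 ≤ w e) ∧ (∀ e ∉ E, w e = 0) ∧ ∀ j : S, ∀ F ⊆ Ej E j, vsum w F ≤ fj j F

/-- `f(F) := Σ_{j ∈ M} f_j (E_j ∩ F)`. -/
def fTot (E : Finset (B × S)) (fj : S → Finset (B × S) → ℝ) (F : Finset (B × S)) : ℝ :=
  ∑ j : S, fj j (Ej E j ∩ F)

/-- `f_w(F) := min_{F ⊆ F' ⊆ E} (f(F') - w(F'))`. -/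
def fw (E : Finset (B × S)) (fj : S → Finset (B × S) → ℝ)
    (w : B × S → ℝ) (F : Finset (B × S)) : ℝ :=
  sInf {r : ℝ | ∃ F' : Finset (B × S), F ⊆ F' ∧ F' ⊆ E ∧ r = fTot E fj F' - vsum w F'}

/-- Membership in the remnant supply polytope `P_{w,d}`. -/
def memPwd (E : Finset (B × S)) (fj : S → Finset (B × S) → ℝ)
    (w : B × S → ℝ) (d : B → ℝ) (x : B × S → ℝ) : Prop :=
  (∀ e, 0 ≤ x e) ∧ (∀ e ∉ E, x e = 0) ∧ memP E fj (w + x) ∧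
    ∀ i : B, vsum x (Ei E i) ≤ d i

/-- `f_{w,d}(F) := max_{x ∈ P_{w,d}} x(F)`. -/
def fwd (E : Finset (B × S)) (fj : S → Finset (B × S) → ℝ)
    (w : B × S → ℝ) (d : B → ℝ) (F : Finset (B × S)) : ℝ :=
  sSup {r : ℝ | ∃ x : B × S → ℝ, memPwd E fj w d x ∧ r = vsum x F}

/-- `P^i_{w,d}(ξ)`: the remnant supply polytope of the buyers other than `i`,
given that buyer `i` receives `ξ`.  (Vectors indexed by `N - i` are encoded as
functions on all of `B` vanishing at `i`.) -/
def PiWd (E : Finset (B × S)) (fj : S → Finset (B × S) → ℝ)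
    (w : B × S → ℝ) (d : B → ℝ) (i : B) (ξ : B × S → ℝ) : Set (B → ℝ) :=
  {u | u i = 0 ∧ (∀ k, 0 ≤ u k) ∧
    ∃ x : B × S → ℝ, memPwd E fj w d x ∧ (∀ e ∈ Ei E i, x e = ξ e) ∧
      ∀ k : B, k ≠ i → vsum x (Ei E k) = u k}

/-- The clinching polytope `P^i_{w,d}` of buyer `i`:
all `ξ ∈ ℝ_{≥0}^{E_i}` with `P^i_{w,d}(ξ) = P^i_{w,d}(0)`. -/
def ClinchP (E : Finset (B × S)) (fj : S → Finset (B × S) → ℝ)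
    (w : B × S → ℝ) (d : B → ℝ) (i : B) : Set (B × S → ℝ) :=
  {ξ | (∀ e, 0 ≤ ξ e) ∧ (∀ e ∉ Ei E i, ξ e = 0) ∧
    PiWd E fj w d i ξ = PiWd E fj w d i 0}


set_option linter.unusedSectionVars false

section StrongDuality

variable {B S : Type*} [Fintype B] [Fintype S] [DecidableEq B] [DecidableEq S]

variable (E : Finset (B × S)) (fj : S → Finset (B × S) → ℝ) (w : B × S → ℝ)

/-- Partition of a subset of `E` according to sellers. -/
lemma vsum_seller_split (x : B × S → ℝ) (G : Finset (B × S)) (hG : G ⊆ E) :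
    vsum x G = ∑ j : S, vsum x (Ej E j ∩ G) := by
  classical
  have h : ∀ j : S, Ej E j ∩ G = G.filter (fun e => e.2 = j) := by
    intro j
    ext e
    simp only [Ej, mem_inter, mem_filter]
    constructor
    · rintro ⟨⟨-, h2⟩, hG'⟩; exact ⟨hG', h2⟩
    · rintro ⟨hG', h2⟩; exact ⟨⟨hG hG', h2⟩, hG'⟩
  simp only [h, vsum]
  exact (Finset.sum_fiberwise G (fun e => e.2) x).symm

lemma vsum_nonneg {x : B × S → ℝ} (hx : ∀ e, 0 ≤ x e) (G : Finset (B × S)) : 0 ≤ vsum x G :=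
  Finset.sum_nonneg fun e _ => hx e

lemma vsum_mono {x : B × S → ℝ} (hx : ∀ e, 0 ≤ x e) {G H : Finset (B × S)} (h : G ⊆ H) :
    vsum x G ≤ vsum x H :=
  Finset.sum_le_sum_of_subset_of_nonneg h fun e _ _ => hx e

lemma vsum_add (x y : B × S → ℝ) (G : Finset (B × S)) :
    vsum (x + y) G = vsum x G + vsum y G := by
  simp [vsum, Finset.sum_add_distrib]

lemma vsum_union_inter (x : B × S → ℝ) (G H : Finset (B × S)) :
    vsum x (G ∪ H) + vsum x (G ∩ H) = vsum x G + vsum x H :=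
  Finset.sum_union_inter

lemma vsum_sdiff (x : B × S → ℝ) {G H : Finset (B × S)} (h : G ⊆ H) :
    vsum x (H \ G) + vsum x G = vsum x H :=
  Finset.sum_sdiff h

lemma vsum_zero_off {x : B × S → ℝ} {T : Finset (B × S)} (hx : ∀ e ∉ T, x e = 0)
    (G : Finset (B × S)) : vsum x G = vsum x (G ∩ T) := by
  classical
  refine (Finset.sum_subset Finset.inter_subset_left ?_).symm
  intro e he hnot
  exact hx e (fun hT => hnot (Finset.mem_inter.2 ⟨he, hT⟩))

lemma fTot_empty (hfj : ∀ j : S, IsMonoSubmodular (Ej E j) (fj j)) : fTot E fj ∅ = 0 := by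
  simp only [fTot, Finset.inter_empty]
  exact Finset.sum_eq_zero fun j _ => (hfj j).1

lemma fTot_mono (hfj : ∀ j : S, IsMonoSubmodular (Ej E j) (fj j)) {G H : Finset (B × S)} (h : G ⊆ H) : fTot E fj G ≤ fTot E fj H := by
  refine Finset.sum_le_sum fun j _ => ?_
  exact (hfj j).2.1 _ _ (Finset.inter_subset_inter_left h) Finset.inter_subset_left

lemma fTot_submodular (hfj : ∀ j : S, IsMonoSubmodular (Ej E j) (fj j)) (G H : Finset (B × S)) :
    fTot E fj (G ∩ H) + fTot E fj (G ∪ H) ≤ fTot E fj G + fTot E fj H := by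
  have key : ∀ j : S,
      fj j (Ej E j ∩ (G ∩ H)) + fj j (Ej E j ∩ (G ∪ H))
        ≤ fj j (Ej E j ∩ G) + fj j (Ej E j ∩ H) := by
    intro j
    have h1 : Ej E j ∩ (G ∩ H) = (Ej E j ∩ G) ∩ (Ej E j ∩ H) := by
      ext e; simp only [mem_inter]; tauto
    have h2 : Ej E j ∩ (G ∪ H) = (Ej E j ∩ G) ∪ (Ej E j ∩ H) := by
      ext e; simp only [mem_inter, mem_union]; tauto
    rw [h1, h2]
    exact (hfj j).2.2 _ _ Finset.inter_subset_left Finset.inter_subset_left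
  calc fTot E fj (G ∩ H) + fTot E fj (G ∪ H)
      = ∑ j : S, (fj j (Ej E j ∩ (G ∩ H)) + fj j (Ej E j ∩ (G ∪ H))) := by
        simp [fTot, Finset.sum_add_distrib]
    _ ≤ ∑ j : S, (fj j (Ej E j ∩ G) + fj j (Ej E j ∩ H)) := Finset.sum_le_sum fun j _ => key j
    _ = fTot E fj G + fTot E fj H := by simp [fTot, Finset.sum_add_distrib]

lemma fTot_of_subset_Ej (hfj : ∀ j : S, IsMonoSubmodular (Ej E j) (fj j))
    {j : S} {G : Finset (B × S)} (hG : G ⊆ Ej E j) : fTot E fj G = fj j G := by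
  classical
  have hGj : ∀ e ∈ G, e.2 = j := by
    intro e he
    exact (Finset.mem_filter.1 (hG he)).2
  have h0 : ∀ j' : S, j' ≠ j → Ej E j' ∩ G = ∅ := by
    intro j' hj'
    ext e
    simp only [Finset.notMem_empty, iff_false, mem_inter, Ej, mem_filter]
    rintro ⟨⟨-, h2⟩, hG'⟩
    exact hj' (h2 ▸ (hGj e hG').symm ▸ rfl)
  have hj : Ej E j ∩ G = G := by
    apply Finset.inter_eq_right.2 hG
  rw [fTot, Finset.sum_eq_single j]
  · rw [hj]
  · intro j' _ hj'
    rw [h0 j' hj', (hfj j').1]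
  · intro h; exact absurd (Finset.mem_univ j) h

end StrongDuality
section GW

variable {B S : Type*} [Fintype B] [Fintype S] [DecidableEq B] [DecidableEq S]

variable (E : Finset (B × S)) (fj : S → Finset (B × S) → ℝ) (w : B × S → ℝ)

/-- Candidate values for the contracted rank function. -/
def gwCands (A : Finset (B × S)) : Finset ℝ :=
  (E.powerset.filter (fun F' => A ∩ E ⊆ F')).image (fun F' => fTot E fj F' - vsum w F')

lemma gwCands_nonempty (A : Finset (B × S)) : (gwCands E fj w A).Nonempty := by
  refine ⟨fTot E fj E - vsum w E, ?_⟩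
  apply Finset.mem_image_of_mem
  simp [Finset.mem_filter, Finset.mem_powerset]

/-- The contracted rank function `f_w`, as a finite minimum. -/
def gw (A : Finset (B × S)) : ℝ := (gwCands E fj w A).min' (gwCands_nonempty E fj w A)

lemma gw_le {A F' : Finset (B × S)} (hF' : F' ⊆ E) (hAF' : A ∩ E ⊆ F') :
    gw E fj w A ≤ fTot E fj F' - vsum w F' := by
  apply Finset.min'_le
  exact Finset.mem_image_of_mem _ (Finset.mem_filter.2 ⟨Finset.mem_powerset.2 hF', hAF'⟩)

lemma gw_spec (A : Finset (B × S)) :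
    ∃ F', F' ⊆ E ∧ A ∩ E ⊆ F' ∧ gw E fj w A = fTot E fj F' - vsum w F' := by
  have := Finset.min'_mem (gwCands E fj w A) (gwCands_nonempty E fj w A)
  simp only [gwCands, Finset.mem_image] at this
  obtain ⟨F', hF', hval⟩ := this
  rw [Finset.mem_filter, Finset.mem_powerset] at hF'
  exact ⟨F', hF'.1, hF'.2, hval.symm⟩

lemma gw_mono {A A' : Finset (B × S)} (h : A ⊆ A') : gw E fj w A ≤ gw E fj w A' := by
  obtain ⟨F', h1, h2, h3⟩ := gw_spec E fj w A'
  rw [h3]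
  exact gw_le E fj w h1 (Finset.Subset.trans (Finset.inter_subset_inter h (Finset.Subset.refl E)) h2)

lemma gw_submodular (hfj : ∀ j : S, IsMonoSubmodular (Ej E j) (fj j))
    (A A' : Finset (B × S)) :
    gw E fj w (A ∩ A') + gw E fj w (A ∪ A') ≤ gw E fj w A + gw E fj w A' := by
  obtain ⟨FA, hFA, hAFA, hvA⟩ := gw_spec E fj w A
  obtain ⟨FB, hFB, hAFB, hvB⟩ := gw_spec E fj w A'
  have h1 : gw E fj w (A ∩ A') ≤ fTot E fj (FA ∩ FB) - vsum w (FA ∩ FB) := by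
    apply gw_le E fj w (Finset.Subset.trans Finset.inter_subset_left hFA)
    intro e he
    rw [mem_inter] at he ⊢
    obtain ⟨he1, he2⟩ := he
    rw [mem_inter] at he1
    exact ⟨hAFA (mem_inter.2 ⟨he1.1, he2⟩), hAFB (mem_inter.2 ⟨he1.2, he2⟩)⟩
  have h2 : gw E fj w (A ∪ A') ≤ fTot E fj (FA ∪ FB) - vsum w (FA ∪ FB) := by
    apply gw_le E fj w (Finset.union_subset hFA hFB)
    intro e he
    rw [mem_inter, mem_union] at he
    rw [mem_union]
    rcases he.1 with h | h
    · exact Or.inl (hAFA (mem_inter.2 ⟨h, he.2⟩))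
    · exact Or.inr (hAFB (mem_inter.2 ⟨h, he.2⟩))
  have h3 := fTot_submodular E fj hfj FA FB
  have h4 := vsum_union_inter w FA FB
  linarith [h1, h2]

lemma gw_nonneg (hfj : ∀ j : S, IsMonoSubmodular (Ej E j) (fj j)) (hw : memP E fj w)
    (A : Finset (B × S)) : 0 ≤ gw E fj w A := by
  apply Finset.le_min'
  intro r hr
  simp only [gwCands, Finset.mem_image] at hr
  obtain ⟨F', hF', rfl⟩ := hr
  rw [Finset.mem_filter, Finset.mem_powerset] at hF'
  have hsplit := vsum_seller_split E w F' hF'.1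
  have hterm : ∀ j : S, vsum w (Ej E j ∩ F') ≤ fj j (Ej E j ∩ F') := by
    intro j
    exact hw.2.2 j _ Finset.inter_subset_left
  have : vsum w F' ≤ fTot E fj F' := by
    rw [hsplit, fTot]
    exact Finset.sum_le_sum fun j _ => hterm j
  linarith

lemma gw_empty (hfj : ∀ j : S, IsMonoSubmodular (Ej E j) (fj j)) (hw : memP E fj w) :
    gw E fj w ∅ = 0 := by
  refine le_antisymm ?_ (gw_nonneg E fj w hfj hw ∅)
  have := gw_le E fj w (F' := ∅) (A := ∅) (Finset.empty_subset E) (by simp)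
  simpa [fTot_empty E fj hfj, vsum] using this

/-- Any feasible `x` (i.e. `w + x ∈ P`, `x ≥ 0` supported on `E`) satisfies the
`gw` constraints. -/
lemma vsum_le_gw (hw : memP E fj w) {x : B × S → ℝ}
    (hx0 : ∀ e, 0 ≤ x e) (hxE : ∀ e ∉ E, x e = 0) (hxP : memP E fj (w + x))
    (A : Finset (B × S)) : vsum x A ≤ gw E fj w A := by
  apply Finset.le_min'
  intro r hr
  simp only [gwCands, Finset.mem_image] at hr
  obtain ⟨F', hF', rfl⟩ := hr
  rw [Finset.mem_filter, Finset.mem_powerset] at hF'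
  have h1 : vsum x A = vsum x (A ∩ E) := vsum_zero_off hxE A
  have h2 : vsum x (A ∩ E) ≤ vsum x F' := vsum_mono hx0 hF'.2
  have h3 : vsum (w + x) F' ≤ fTot E fj F' := by
    rw [vsum_seller_split E (w + x) F' hF'.1, fTot]
    exact Finset.sum_le_sum fun j _ => hxP.2.2 j _ Finset.inter_subset_left
  have h4 := vsum_add w x F'
  linarith

/-- Conversely, nonnegative `x` supported on `E` satisfying the `gw` constraints
and the demand constraints is in `P_{w,d}`. -/
lemma memPwd_of_gw (hfj : ∀ j : S, IsMonoSubmodular (Ej E j) (fj j)) (hw : memP E fj w)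
    (d : B → ℝ) {x : B × S → ℝ}
    (hx0 : ∀ e, 0 ≤ x e) (hxE : ∀ e ∉ E, x e = 0)
    (hgw : ∀ A ⊆ E, vsum x A ≤ gw E fj w A)
    (hcap : ∀ k : B, vsum x (Ei E k) ≤ d k) : memPwd E fj w d x := by
  refine ⟨hx0, hxE, ⟨fun e => add_nonneg (hw.1 e) (hx0 e), fun e he => ?_, fun j G hG => ?_⟩, hcap⟩
  · simp [hw.2.1 e he, hxE e he]
  · have hGE : G ⊆ E := Finset.Subset.trans hG (Finset.filter_subset _ E)
    have h1 : vsum x G ≤ gw E fj w G := hgw G hGE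
    have h2 : gw E fj w G ≤ fTot E fj G - vsum w G := gw_le E fj w hGE Finset.inter_subset_left
    have h3 : fTot E fj G = fj j G := fTot_of_subset_Ej E fj hfj hG
    have h4 := vsum_add w x G
    linarith

end GW
section Cut

variable {B S : Type*} [Fintype B] [Fintype S] [DecidableEq B] [DecidableEq S]

variable (E F : Finset (B × S)) (fj : S → Finset (B × S) → ℝ) (w : B × S → ℝ)
  (d : B → ℝ) (i : B)

/-- The restricted edge set `E_X \ (E_i \ F)`. -/
def Ep (X : Finset B) : Finset (B × S) := EX E X \ (Ei E i \ F)

lemma mem_Ep {X : Finset B} {e : B × S} :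
    e ∈ Ep E F i X ↔ (e ∈ E ∧ e.1 ∈ X) ∧ ¬((e ∈ E ∧ e.1 = i) ∧ e ∉ F) := by
  simp [Ep, EX, Ei, Finset.mem_sdiff, Finset.mem_filter]

lemma Ep_subset (X : Finset B) : Ep E F i X ⊆ E := fun e he => ((mem_Ep E F i).1 he).1.1

lemma Ep_mono {X Y : Finset B} (h : X ⊆ Y) : Ep E F i X ⊆ Ep E F i Y := by
  intro e he
  rw [mem_Ep] at he ⊢
  exact ⟨⟨he.1.1, h he.1.2⟩, he.2⟩

lemma Ep_inter (X Y : Finset B) : Ep E F i (X ∩ Y) = Ep E F i X ∩ Ep E F i Y := by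
  ext e; simp only [mem_Ep, Finset.mem_inter]; tauto

lemma Ep_union (X Y : Finset B) : Ep E F i (X ∪ Y) = Ep E F i X ∪ Ep E F i Y := by
  ext e; simp only [mem_Ep, Finset.mem_union]; tauto

lemma vsum_buyer_split (x : B × S → ℝ) (G : Finset (B × S)) :
    vsum x G = ∑ k : B, vsum x (G.filter (fun e => e.1 = k)) := by
  simp only [vsum]
  exact (Finset.sum_fiberwise G (fun e => e.1) x).symm

/-- The candidate cut values. -/
def cutCands (X : Finset B) : Finset ℝ :=
  X.powerset.image (fun Z => gw E fj w (Ep E F i Z) + ∑ k ∈ X \ Z, d k)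

lemma cutCands_nonempty (X : Finset B) : (cutCands E F fj w d i X).Nonempty :=
  ⟨_, Finset.mem_image_of_mem _ (Finset.mem_powerset.2 (Finset.Subset.refl X))⟩

/-- The min-cut value. -/
def cut (X : Finset B) : ℝ := (cutCands E F fj w d i X).min' (cutCands_nonempty E F fj w d i X)

lemma cut_le {X Z : Finset B} (hZ : Z ⊆ X) :
    cut E F fj w d i X ≤ gw E fj w (Ep E F i Z) + ∑ k ∈ X \ Z, d k :=
  Finset.min'_le _ _ (Finset.mem_image_of_mem _ (Finset.mem_powerset.2 hZ))

lemma cut_spec (X : Finset B) :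
    ∃ Z, Z ⊆ X ∧ cut E F fj w d i X = gw E fj w (Ep E F i Z) + ∑ k ∈ X \ Z, d k := by
  have := Finset.min'_mem (cutCands E F fj w d i X) (cutCands_nonempty E F fj w d i X)
  simp only [cutCands, Finset.mem_image] at this
  obtain ⟨Z, hZ, hval⟩ := this
  exact ⟨Z, Finset.mem_powerset.1 hZ, hval.symm⟩

lemma cut_nonneg (hfj : ∀ j : S, IsMonoSubmodular (Ej E j) (fj j)) (hw : memP E fj w)
    (hd : ∀ k : B, 0 ≤ d k) (X : Finset B) : 0 ≤ cut E F fj w d i X := by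
  obtain ⟨Z, hZ, hval⟩ := cut_spec E F fj w d i X
  rw [hval]
  exact add_nonneg (gw_nonneg E fj w hfj hw _) (Finset.sum_nonneg fun k _ => hd k)

lemma cut_mono (hd : ∀ k : B, 0 ≤ d k) {X Y : Finset B} (h : X ⊆ Y) :
    cut E F fj w d i X ≤ cut E F fj w d i Y := by
  obtain ⟨Z, hZ, hval⟩ := cut_spec E F fj w d i Y
  have h1 : cut E F fj w d i X ≤ gw E fj w (Ep E F i (Z ∩ X)) + ∑ k ∈ X \ (Z ∩ X), d k :=
    cut_le E F fj w d i Finset.inter_subset_right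
  have h2 : gw E fj w (Ep E F i (Z ∩ X)) ≤ gw E fj w (Ep E F i Z) :=
    gw_mono E fj w (Ep_mono E F i Finset.inter_subset_left)
  have h3 : ∑ k ∈ X \ (Z ∩ X), d k ≤ ∑ k ∈ Y \ Z, d k := by
    apply Finset.sum_le_sum_of_subset_of_nonneg
    · intro k hk
      rw [Finset.mem_sdiff, Finset.mem_inter] at hk
      rw [Finset.mem_sdiff]
      exact ⟨h hk.1, fun hkZ => hk.2 ⟨hkZ, hk.1⟩⟩
    · exact fun k _ _ => hd k
  linarith

lemma cut_submodular (hfj : ∀ j : S, IsMonoSubmodular (Ej E j) (fj j))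
    (hd : ∀ k : B, 0 ≤ d k) (X Y : Finset B) :
    cut E F fj w d i (X ∩ Y) + cut E F fj w d i (X ∪ Y)
      ≤ cut E F fj w d i X + cut E F fj w d i Y := by
  obtain ⟨ZX, hZX, hvX⟩ := cut_spec E F fj w d i X
  obtain ⟨ZY, hZY, hvY⟩ := cut_spec E F fj w d i Y
  have h1 : cut E F fj w d i (X ∩ Y)
      ≤ gw E fj w (Ep E F i (ZX ∩ ZY)) + ∑ k ∈ (X ∩ Y) \ (ZX ∩ ZY), d k :=
    cut_le E F fj w d i (Finset.inter_subset_inter hZX hZY)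
  have h2 : cut E F fj w d i (X ∪ Y)
      ≤ gw E fj w (Ep E F i (ZX ∪ ZY)) + ∑ k ∈ (X ∪ Y) \ (ZX ∪ ZY), d k :=
    cut_le E F fj w d i (Finset.union_subset_union hZX hZY)
  have hgw : gw E fj w (Ep E F i (ZX ∩ ZY)) + gw E fj w (Ep E F i (ZX ∪ ZY))
      ≤ gw E fj w (Ep E F i ZX) + gw E fj w (Ep E F i ZY) := by
    rw [Ep_inter, Ep_union]
    exact gw_submodular E fj w hfj _ _
  have hdsum : ∑ k ∈ (X ∩ Y) \ (ZX ∩ ZY), d k + ∑ k ∈ (X ∪ Y) \ (ZX ∪ ZY), d k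
      ≤ ∑ k ∈ X \ ZX, d k + ∑ k ∈ Y \ ZY, d k := by
    have hind : ∀ (A : Finset B), ∑ k ∈ A, d k = ∑ k : B, (if k ∈ A then d k else 0) := by
      intro A
      rw [Finset.sum_ite_mem, Finset.univ_inter]
    rw [hind ((X ∩ Y) \ (ZX ∩ ZY)), hind ((X ∪ Y) \ (ZX ∪ ZY)), hind (X \ ZX), hind (Y \ ZY),
      ← Finset.sum_add_distrib, ← Finset.sum_add_distrib]
    apply Finset.sum_le_sum
    intro k _
    have hx1 : k ∈ ZX → k ∈ X := fun h => hZX h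
    have hy1 : k ∈ ZY → k ∈ Y := fun h => hZY h
    by_cases h1 : k ∈ X <;> by_cases h2 : k ∈ Y <;> by_cases h3 : k ∈ ZX <;>
      by_cases h4 : k ∈ ZY <;>
      simp_all [Finset.mem_sdiff, Finset.mem_inter, Finset.mem_union] <;> linarith [hd k]
  linarith

/-- Weak duality: every feasible transaction is bounded by every cut. -/
lemma weak_duality (hw : memP E fj w) {x : B × S → ℝ} (hx : memPwd E fj w d x)
    (X : Finset B) : vsum x (Ep E F i X) ≤ cut E F fj w d i X := by
  obtain ⟨Z, hZ, hval⟩ := cut_spec E F fj w d i X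
  obtain ⟨hx0, hxE, hxP, hxcap⟩ := hx
  have hsub : Ep E F i Z ⊆ Ep E F i X := Ep_mono E F i hZ
  have hsplit : vsum x (Ep E F i X \ Ep E F i Z) + vsum x (Ep E F i Z) = vsum x (Ep E F i X) :=
    vsum_sdiff x hsub
  have h1 : vsum x (Ep E F i Z) ≤ gw E fj w (Ep E F i Z) :=
    vsum_le_gw E fj w hw hx0 hxE hxP _
  set G := Ep E F i X \ Ep E F i Z with hG
  have h2 : vsum x G ≤ ∑ k ∈ X \ Z, d k := by
    rw [vsum_buyer_split x G]
    have hzero : ∀ k, k ∉ X \ Z → vsum x (G.filter (fun e => e.1 = k)) = 0 := by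
      intro k hk
      have : G.filter (fun e => e.1 = k) = ∅ := by
        rw [Finset.filter_eq_empty_iff]
        intro e he hek
        rw [hG, Finset.mem_sdiff, mem_Ep, mem_Ep] at he
        apply hk
        rw [Finset.mem_sdiff]
        refine ⟨hek ▸ he.1.1.2, fun hkZ => he.2 ⟨⟨he.1.1.1, hek ▸ hkZ⟩, he.1.2⟩⟩
      rw [this]
      simp [vsum]
    have hsum0 : ∑ k : B, vsum x (G.filter (fun e => e.1 = k))
        = ∑ k ∈ X \ Z, vsum x (G.filter (fun e => e.1 = k)) := by
      symm
      apply Finset.sum_subset (Finset.subset_univ _)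
      intro k _ hk
      exact hzero k hk
    rw [hsum0]
    apply Finset.sum_le_sum
    intro k _
    refine le_trans (vsum_mono hx0 ?_) (hxcap k)
    intro e he
    rw [Finset.mem_filter, hG, Finset.mem_sdiff, mem_Ep] at he
    exact Finset.mem_filter.2 ⟨he.1.1.1.1, he.2⟩
  linarith

end Cut
section Strong

variable {B S : Type*} [Fintype B] [Fintype S] [DecidableEq B] [DecidableEq S]

variable (E F : Finset (B × S)) (fj : S → Finset (B × S) → ℝ) (w : B × S → ℝ)
  (d : B → ℝ) (i : B)

lemma strong_duality (hfj : ∀ j : S, IsMonoSubmodular (Ej E j) (fj j)) (hw : memP E fj w)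
    (hd : ∀ k : B, 0 ≤ d k) (X : Finset B) :
    ∃ x : B × S → ℝ, memPwd E fj w d x ∧ cut E F fj w d i X ≤ vsum x (Ep E F i X) := by
  classical
  set T := Ep E F i X with hT
  have hTE : T ⊆ E := Ep_subset E F i X
  set Tk : B → Finset (B × S) := fun k => T.filter (fun e => e.1 = k) with hTk
  have hTkT : ∀ k, Tk k ⊆ T := fun k => Finset.filter_subset _ _
  set Q : Set ((B × S) → ℝ) := {x | (∀ e, 0 ≤ x e) ∧ (∀ e ∉ T, x e = 0) ∧
    (∀ A ∈ T.powerset, vsum x A ≤ gw E fj w A) ∧ ∀ k, vsum x (Tk k) ≤ d k} with hQ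
  have hcont : ∀ G : Finset (B × S), Continuous fun x : (B × S) → ℝ => vsum x G := by
    intro G
    exact continuous_finset_sum _ fun e _ => continuous_apply e
  have h0Q : (0 : (B × S) → ℝ) ∈ Q := by
    refine ⟨fun e => le_refl 0, fun e _ => rfl, fun A _ => ?_, fun k => ?_⟩
    · simpa [vsum] using gw_nonneg E fj w hfj hw A
    · simpa [vsum] using hd k
  have hQclosed : IsClosed Q := by
    have : Q = (⋂ e, {x : (B × S) → ℝ | 0 ≤ x e}) ∩
        ((⋂ e ∈ {e | e ∉ T}, {x : (B × S) → ℝ | x e = 0}) ∩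
        ((⋂ A ∈ (↑T.powerset : Set (Finset (B × S))), {x | vsum x A ≤ gw E fj w A}) ∩
        (⋂ k, {x : (B × S) → ℝ | vsum x (Tk k) ≤ d k}))) := by
      ext x
      simp only [hQ, Set.mem_setOf_eq, Set.mem_inter_iff, Set.mem_iInter,
        Finset.mem_coe, Set.mem_setOf_eq]
    rw [this]
    refine IsClosed.inter (isClosed_iInter fun e => isClosed_le continuous_const
      (continuous_apply e)) (IsClosed.inter ?_ (IsClosed.inter ?_ ?_))
    · exact isClosed_biInter fun e _ => isClosed_eq (continuous_apply e) continuous_const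
    · exact isClosed_biInter fun A _ => isClosed_le (hcont A) continuous_const
    · exact isClosed_iInter fun k => isClosed_le (hcont (Tk k)) continuous_const
  have hQsub : Q ⊆ Set.Icc (0 : (B × S) → ℝ) (fun _ => gw E fj w T) := by
    rintro x ⟨hx0, hxT, hxgw, -⟩
    constructor
    · intro e; exact hx0 e
    · intro e
      by_cases he : e ∈ T
      · have h1 : vsum x {e} ≤ gw E fj w {e} :=
          hxgw {e} (Finset.mem_powerset.2 (Finset.singleton_subset_iff.2 he))
        have h2 : gw E fj w {e} ≤ gw E fj w T :=
          gw_mono E fj w (Finset.singleton_subset_iff.2 he)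
        simpa [vsum] using le_trans h1 h2
      · rw [hxT e he]
        exact gw_nonneg E fj w hfj hw T
  have hQcomp : IsCompact Q :=
    IsCompact.of_isClosed_subset isCompact_Icc hQclosed hQsub
  obtain ⟨x, hxQ, hxmax'⟩ := hQcomp.exists_isMaxOn ⟨0, h0Q⟩ ((hcont T).continuousOn)
  have hxmax : ∀ y ∈ Q, vsum y T ≤ vsum x T := fun y hy => hxmax' hy
  obtain ⟨hx0, hxT, hxgw, hxcap⟩ := hxQ
  -- tight sets
  have htight_union : ∀ A A' : Finset (B × S), A ⊆ T → A' ⊆ T →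
      vsum x A = gw E fj w A → vsum x A' = gw E fj w A' →
      (vsum x (A ∩ A') = gw E fj w (A ∩ A') ∧ vsum x (A ∪ A') = gw E fj w (A ∪ A')) := by
    intro A A' hA hA' htA htA'
    have h1 : vsum x (A ∩ A') ≤ gw E fj w (A ∩ A') :=
      hxgw _ (Finset.mem_powerset.2 (Finset.Subset.trans Finset.inter_subset_left hA))
    have h2 : vsum x (A ∪ A') ≤ gw E fj w (A ∪ A') :=
      hxgw _ (Finset.mem_powerset.2 (Finset.union_subset hA hA'))
    have h3 := gw_submodular E fj w hfj A A'
    have h4 := vsum_union_inter x A A'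
    constructor <;> linarith
  -- minimal tight set containing an element
  set De : B × S → Finset (B × S) :=
    fun e => (T.powerset.filter (fun A => vsum x A = gw E fj w A ∧ e ∈ A)).inf id with hDe
  set covered : B × S → Prop :=
    fun e => ∃ A, (A ⊆ T ∧ vsum x A = gw E fj w A) ∧ e ∈ A with hcovdef
  have hDe_subset : ∀ {e A}, A ⊆ T → vsum x A = gw E fj w A → e ∈ A → De e ⊆ A := by
    intro e A hA ht he
    have : A ∈ T.powerset.filter (fun A => vsum x A = gw E fj w A ∧ e ∈ A) :=
      Finset.mem_filter.2 ⟨Finset.mem_powerset.2 hA, ht, he⟩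
    exact Finset.le_iff_subset.mp (Finset.inf_le this)
  have hDe_tight : ∀ {e}, covered e →
      De e ⊆ T ∧ vsum x (De e) = gw E fj w (De e) ∧ e ∈ De e := by
    intro e hcov
    obtain ⟨A0, ⟨hA0T, hA0t⟩, heA0⟩ := hcov
    set s := T.powerset.filter (fun A => vsum x A = gw E fj w A ∧ e ∈ A) with hs
    have hsne : s.Nonempty :=
      ⟨A0, Finset.mem_filter.2 ⟨Finset.mem_powerset.2 hA0T, hA0t, heA0⟩⟩
    have key : ∀ (t : Finset (Finset (B × S))), t.Nonempty →
        (∀ A ∈ t, A ⊆ T ∧ vsum x A = gw E fj w A ∧ e ∈ A) →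
        (t.inf id ⊆ T ∧ vsum x (t.inf id) = gw E fj w (t.inf id) ∧ e ∈ t.inf id) := by
      intro t ht
      induction ht using Finset.Nonempty.cons_induction with
      | singleton a =>
        intro hall
        simpa using hall a (Finset.mem_singleton_self a)
      | cons a t ha hne ih =>
        intro hall
        have hih := ih (fun A hA => hall A (Finset.mem_cons_of_mem hA))
        have hha := hall a (Finset.mem_cons_self a t)
        rw [Finset.inf_cons]
        have hint := htight_union a (t.inf id) hha.1 hih.1 hha.2.1 hih.2.1
        exact ⟨Finset.Subset.trans Finset.inter_subset_left hha.1, hint.1,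
          Finset.mem_inter.2 ⟨hha.2.2, hih.2.2⟩⟩
    have := key s hsne (fun A hA => by
      have := Finset.mem_filter.1 hA
      exact ⟨Finset.mem_powerset.1 this.1, this.2.1, this.2.2⟩)
    exact this
  -- the exchange step relation and reachability
  set Step : B → B → Prop := fun k k' =>
    ∃ e e', e ∈ Tk k ∧ covered e ∧ e' ∈ De e ∧ e' ∈ Tk k' ∧ 0 < x e' with hStep
  set Reach : B → Prop :=
    fun k => ∃ k₀, vsum x (Tk k₀) < d k₀ ∧ Relation.ReflTransGen Step k₀ k with hReach
  -- every element of a reachable buyer's part is covered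
  have hcov : ∀ k, Reach k → ∀ e ∈ Tk k, covered e := by
    rintro k ⟨k₀, hk₀, hpath⟩ estar hestarT
    by_contra hestar
    -- extract a chain
    have hchain : ∃ (m : ℕ) (ks : ℕ → B), ks 0 = k₀ ∧ ks m = k ∧
        ∀ j, j < m → Step (ks j) (ks (j + 1)) := by
      clear hestarT hestar
      induction hpath with
      | refl => exact ⟨0, fun _ => k₀, rfl, rfl, fun j hj => absurd hj (Nat.not_lt_zero j)⟩
      | @tail b c hab hbc ih =>
        obtain ⟨m, ks, h0, hm, hst⟩ := ih
        refine ⟨m + 1, fun j => if j ≤ m then ks j else c, by simp [h0], by simp, ?_⟩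
        intro j hj
        show Step (if j ≤ m then ks j else c) (if j + 1 ≤ m then ks (j + 1) else c)
        rcases Nat.lt_or_ge j m with hjm | hjm
        · rw [if_pos (by omega : j ≤ m), if_pos (by omega : j + 1 ≤ m)]
          exact hst j hjm
        · have hjm' : j = m := by omega
          subst hjm'
          rw [if_pos (Nat.le_refl j), if_neg (by omega), hm]
          exact hbc
    obtain ⟨m, ks, hks0, hksm, hstep⟩ := hchain
    -- choose witnesses along the chain
    have hwit : ∀ j, j < m → ∃ p : (B × S) × (B × S), p.1 ∈ Tk (ks j) ∧ covered p.1 ∧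
        p.2 ∈ De p.1 ∧ p.2 ∈ Tk (ks (j + 1)) ∧ 0 < x p.2 := by
      intro j hj
      obtain ⟨e, e', h1, h2, h3, h4, h5⟩ := hstep j hj
      exact ⟨(e, e'), h1, h2, h3, h4, h5⟩
    set es : ℕ → B × S := fun j => if h : j < m then (hwit j h).choose.1 else estar with hes
    set es' : ℕ → B × S := fun j => if h : j < m then (hwit j h).choose.2 else estar with hes'
    have hwits : ∀ j, j < m → es j ∈ Tk (ks j) ∧ covered (es j) ∧
        es' j ∈ De (es j) ∧ es' j ∈ Tk (ks (j + 1)) ∧ 0 < x (es' j) := by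
      intro j hj
      simp only [hes, hes', dif_pos hj]
      exact (hwit j hj).choose_spec
    -- the increment
    set slackCands : Finset ℝ :=
      (T.powerset.filter (fun A => vsum x A < gw E fj w A)).image
        (fun A => (gw E fj w A - vsum x A) / (m + 1)) with hslackCands
    set decCands : Finset ℝ :=
      (Finset.range m).image (fun j => x (es' j) / (m + 1)) with hdecCands
    set cands : Finset ℝ := insert (d k₀ - vsum x (Tk k₀)) (slackCands ∪ decCands) with hcands
    have hcne : cands.Nonempty := ⟨_, Finset.mem_insert_self _ _⟩
    set ε : ℝ := cands.min' hcne with hε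
    have hεmem : ∀ r ∈ cands, 0 < r := by
      intro r hr
      rw [hcands, Finset.mem_insert, Finset.mem_union] at hr
      rcases hr with hr | hr | hr
      · rw [hr]; linarith
      · rw [hslackCands, Finset.mem_image] at hr
        obtain ⟨A, hA, rfl⟩ := hr
        have h2 : 0 < gw E fj w A - vsum x A := by
          linarith [(Finset.mem_filter.1 hA).2]
        positivity
      · rw [hdecCands, Finset.mem_image] at hr
        obtain ⟨j, hj, rfl⟩ := hr
        have := (hwits j (Finset.mem_range.1 hj)).2.2.2.2
        positivity
    have hεpos : 0 < ε := hεmem _ (Finset.min'_mem cands hcne)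
    have hεle : ∀ r ∈ cands, ε ≤ r := fun r hr => Finset.min'_le cands r hr
    -- the improved vector
    set delta : Finset (B × S) → ℝ := fun A =>
      (if estar ∈ A then (1 : ℝ) else 0) +
        ∑ j ∈ Finset.range m,
          ((if es j ∈ A then (1 : ℝ) else 0) - (if es' j ∈ A then (1 : ℝ) else 0)) with hdelta
    set x' : (B × S) → ℝ := fun e => x e + ε *
      ((if estar = e then (1 : ℝ) else 0) +
        ∑ j ∈ Finset.range m,
          ((if es j = e then (1 : ℝ) else 0) - (if es' j = e then (1 : ℝ) else 0))) with hx'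
    have hδ : ∀ A : Finset (B × S), vsum x' A = vsum x A + ε * delta A := by
      intro A
      rw [hx', hdelta]
      beta_reduce
      simp only [vsum]
      rw [Finset.sum_add_distrib, ← Finset.mul_sum]
      congr 1
      rw [Finset.sum_add_distrib, Finset.sum_ite_eq]
      congr 1
      have hswap : (∑ e ∈ A, ∑ j ∈ Finset.range m,
          ((if es j = e then (1 : ℝ) else 0) - (if es' j = e then (1 : ℝ) else 0)))
          = ∑ j ∈ Finset.range m, ∑ e ∈ A,
            ((if es j = e then (1 : ℝ) else 0) - (if es' j = e then (1 : ℝ) else 0)) :=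
        Finset.sum_comm
      rw [hswap]
      congr 1
      apply Finset.sum_congr rfl
      intro j hj
      rw [Finset.sum_sub_distrib, Finset.sum_ite_eq, Finset.sum_ite_eq]
    -- memberships
    have hesT : ∀ j, j < m → es j ∈ T := fun j hj => (hTkT _) (hwits j hj).1
    have hes'T : ∀ j, j < m → es' j ∈ T := fun j hj => (hTkT _) (hwits j hj).2.2.2.1
    have hestarT' : estar ∈ T := (hTkT k) hestarT
    -- delta of T is 1
    have hδT : delta T = 1 := by
      rw [hdelta]
      beta_reduce
      rw [if_pos hestarT']
      have : ∀ j ∈ Finset.range m,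
          ((if es j ∈ T then (1 : ℝ) else 0) - (if es' j ∈ T then (1 : ℝ) else 0)) = 0 := by
        intro j hj
        rw [if_pos (hesT j (Finset.mem_range.1 hj)), if_pos (hes'T j (Finset.mem_range.1 hj))]
        ring
      rw [Finset.sum_congr rfl this]
      simp
    -- delta of tight sets is ≤ 0
    have hδtight : ∀ A : Finset (B × S), A ⊆ T → vsum x A = gw E fj w A → delta A ≤ 0 := by
      intro A hAT hAt
      rw [hdelta]
      beta_reduce
      have h1 : (if estar ∈ A then (1 : ℝ) else 0) = 0 := by
        rw [if_neg]
        intro hmem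
        exact hestar ⟨A, ⟨hAT, hAt⟩, hmem⟩
      rw [h1, zero_add]
      apply Finset.sum_nonpos
      intro j hj
      by_cases hjA : es j ∈ A
      · have hsub : De (es j) ⊆ A := hDe_subset hAT hAt hjA
        rw [if_pos hjA, if_pos (hsub (hwits j (Finset.mem_range.1 hj)).2.2.1)]
        norm_num
      · rw [if_neg hjA]
        have : (0 : ℝ) ≤ (if es' j ∈ A then (1 : ℝ) else 0) := by positivity
        linarith
    -- delta is bounded above
    have hδbound : ∀ A : Finset (B × S), delta A ≤ m + 1 := by
      intro A
      rw [hdelta]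
      beta_reduce
      have h1 : (if estar ∈ A then (1 : ℝ) else 0) ≤ 1 := by
        split <;> norm_num
      have h2 : ∑ j ∈ Finset.range m,
          ((if es j ∈ A then (1 : ℝ) else 0) - (if es' j ∈ A then (1 : ℝ) else 0))
          ≤ ∑ j ∈ Finset.range m, (1 : ℝ) := by
        apply Finset.sum_le_sum
        intro j _
        have : (0 : ℝ) ≤ (if es' j ∈ A then (1 : ℝ) else 0) := by positivity
        split <;> linarith
      rw [Finset.sum_const, Finset.card_range, nsmul_eq_mul] at h2
      linarith
    -- nonnegativity of x'
    have hx'0 : ∀ e, 0 ≤ x' e := by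
      intro e
      rw [hx']
      beta_reduce
      have hc1 : (0 : ℝ) ≤ (if estar = e then (1 : ℝ) else 0) := by positivity
      by_cases hdec : ∃ j ∈ Finset.range m, es' j = e
      · obtain ⟨j0, hj0, hj0e⟩ := hdec
        have hxe : x (es' j0) / (m + 1) ∈ cands := by
          rw [hcands]
          exact Finset.mem_insert_of_mem (Finset.mem_union_right _
            (Finset.mem_image_of_mem _ hj0))
        have hεx : ε ≤ x e / (m + 1) := by
          rw [← hj0e]; exact hεle _ hxe
        have hm1 : (0 : ℝ) < (m : ℝ) + 1 := by positivity
        have hεm : ε * ((m : ℝ) + 1) ≤ x e := by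
          have := hεx
          rw [le_div_iff₀ hm1] at this
          exact this
        have hsumlb : ∑ j ∈ Finset.range m, (-1 : ℝ) ≤ ∑ j ∈ Finset.range m,
            ((if es j = e then (1 : ℝ) else 0) - (if es' j = e then (1 : ℝ) else 0)) := by
          apply Finset.sum_le_sum
          intro j _
          have h1 : (0 : ℝ) ≤ (if es j = e then (1 : ℝ) else 0) := by positivity
          have h2 : (if es' j = e then (1 : ℝ) else 0) ≤ 1 := by split <;> norm_num
          linarith
        rw [Finset.sum_const, Finset.card_range, nsmul_eq_mul] at hsumlb
        have hp1 := mul_nonneg hεpos.le hc1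
        have hp2 := mul_le_mul_of_nonneg_left hsumlb hεpos.le
        rw [mul_add ε]
        linarith [hp1, hp2, hεm, hεpos]
      · push_neg at hdec
        have hsum : (0 : ℝ) ≤ ∑ j ∈ Finset.range m,
            ((if es j = e then (1 : ℝ) else 0) - (if es' j = e then (1 : ℝ) else 0)) := by
          apply Finset.sum_nonneg
          intro j hj
          rw [if_neg (hdec j hj)]
          have : (0 : ℝ) ≤ (if es j = e then (1 : ℝ) else 0) := by positivity
          linarith
        have hp1 := mul_nonneg hεpos.le hc1
        have hp2 := mul_nonneg hεpos.le hsum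
        rw [mul_add ε]
        linarith [hx0 e]
    -- support of x'
    have hx'T : ∀ e ∉ T, x' e = 0 := by
      intro e he
      rw [hx']
      beta_reduce
      have hne1 : ¬ (estar = e) := by
        intro h; rw [h] at hestarT'; exact he hestarT'
      have h1 : (if estar = e then (1 : ℝ) else 0) = 0 := if_neg hne1
      have h2 : ∀ j ∈ Finset.range m,
          ((if es j = e then (1 : ℝ) else 0) - (if es' j = e then (1 : ℝ) else 0)) = 0 := by
        intro j hj
        have hne2 : ¬ (es j = e) := by
          intro h; apply he; rw [← h]; exact hesT j (Finset.mem_range.1 hj)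
        have hne3 : ¬ (es' j = e) := by
          intro h; apply he; rw [← h]; exact hes'T j (Finset.mem_range.1 hj)
        rw [if_neg hne2, if_neg hne3]
        ring
      rw [h1, Finset.sum_congr rfl h2, hxT e he]
      simp
    -- gw constraints for x'
    have hx'gw : ∀ A ∈ T.powerset, vsum x' A ≤ gw E fj w A := by
      intro A hA
      have hAT := Finset.mem_powerset.1 hA
      rw [hδ]
      by_cases ht : vsum x A = gw E fj w A
      · have h6 := hδtight A hAT ht
        have h7 : ε * delta A ≤ 0 := mul_nonpos_of_nonneg_of_nonpos hεpos.le h6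
        linarith [hxgw A hA]
      · have hlt : vsum x A < gw E fj w A := lt_of_le_of_ne (hxgw A hA) ht
        have hAc : (gw E fj w A - vsum x A) / (m + 1) ∈ cands := by
          rw [hcands]
          refine Finset.mem_insert_of_mem (Finset.mem_union_left _ ?_)
          rw [hslackCands]
          exact Finset.mem_image_of_mem _ (Finset.mem_filter.2 ⟨hA, hlt⟩)
        have hεA : ε ≤ (gw E fj w A - vsum x A) / (m + 1) := hεle _ hAc
        have hb := hδbound A
        have hm1 : (0 : ℝ) < (m : ℝ) + 1 := by positivity
        have h5 : ε * ((m : ℝ) + 1) ≤ gw E fj w A - vsum x A := by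
          rw [le_div_iff₀ hm1] at hεA
          exact hεA
        have h7 : ε * delta A ≤ ε * ((m : ℝ) + 1) := mul_le_mul_of_nonneg_left hb hεpos.le
        linarith
    -- cap constraints for x'
    have hδTk : ∀ k', delta (Tk k') = if ks 0 = k' then (1 : ℝ) else 0 := by
      intro k'
      rw [hdelta]
      beta_reduce
      have h1star : estar.1 = k := (Finset.mem_filter.1 hestarT).2
      have hestarTk : estar ∈ Tk k' ↔ ks m = k' := by
        rw [hTk]
        simp only [Finset.mem_filter]
        constructor
        · rintro ⟨-, h⟩; exact hksm.trans (h1star.symm.trans h)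
        · intro h; exact ⟨hestarT', h1star.trans (hksm.symm.trans h)⟩
      have hesTk : ∀ j, j < m → ((es j ∈ Tk k') ↔ ks j = k') := by
        intro j hj
        have h1 := (hwits j hj).1
        rw [hTk] at h1 ⊢
        simp only [Finset.mem_filter] at h1 ⊢
        constructor
        · rintro ⟨-, h⟩; exact h1.2.symm.trans h
        · intro h; exact ⟨h1.1, h1.2.trans h⟩
      have hes'Tk : ∀ j, j < m → ((es' j ∈ Tk k') ↔ ks (j + 1) = k') := by
        intro j hj
        have h1 := (hwits j hj).2.2.2.1
        rw [hTk] at h1 ⊢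
        simp only [Finset.mem_filter] at h1 ⊢
        constructor
        · rintro ⟨-, h⟩; exact h1.2.symm.trans h
        · intro h; exact ⟨h1.1, h1.2.trans h⟩
      have hrw : ∀ j ∈ Finset.range m,
          ((if es j ∈ Tk k' then (1 : ℝ) else 0) - (if es' j ∈ Tk k' then (1 : ℝ) else 0))
          = ((if ks j = k' then (1 : ℝ) else 0) - (if ks (j + 1) = k' then (1 : ℝ) else 0)) := by
        intro j hj
        rw [Finset.mem_range] at hj
        congr 1
        · simp only [hesTk j hj]
        · simp only [hes'Tk j hj]
      rw [Finset.sum_congr rfl hrw]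
      have htel : ∑ j ∈ Finset.range m,
          ((if ks j = k' then (1 : ℝ) else 0) - (if ks (j + 1) = k' then (1 : ℝ) else 0))
          = (if ks 0 = k' then (1 : ℝ) else 0) - (if ks m = k' then (1 : ℝ) else 0) :=
        Finset.sum_range_sub' (fun j => if ks j = k' then (1 : ℝ) else 0) m
      rw [htel]
      by_cases h : estar ∈ Tk k'
      · rw [if_pos h, if_pos (hestarTk.1 h)]
        ring
      · rw [if_neg h, if_neg (fun hc => h (hestarTk.2 hc))]
        ring
    have hx'cap : ∀ k', vsum x' (Tk k') ≤ d k' := by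
      intro k'
      rw [hδ, hδTk]
      by_cases h : ks 0 = k'
      · rw [if_pos h]
        have hslack : ε ≤ d k₀ - vsum x (Tk k₀) := hεle _ (Finset.mem_insert_self _ _)
        rw [← h, hks0]
        linarith [hslack]
      · rw [if_neg h]
        simpa using hxcap k'
    -- x' is feasible and better: contradiction
    have hx'Q : x' ∈ Q := ⟨hx'0, hx'T, hx'gw, hx'cap⟩
    have hbetter : vsum x T < vsum x' T := by
      rw [hδ, hδT]
      linarith
    exact absurd (hxmax x' hx'Q) (by linarith)
  -- extract the cut
  set Z : Finset B := X.filter (fun k => Reach k) with hZ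
  have hZX : Z ⊆ X := Finset.filter_subset _ _
  set R : Finset (B × S) := T.filter (fun e => Reach e.1) with hR
  have hRT : R ⊆ T := Finset.filter_subset _ _
  have hREp : R = Ep E F i Z := by
    ext e
    rw [hR, Finset.mem_filter, hT, mem_Ep, mem_Ep, hZ, Finset.mem_filter]
    tauto
  have hcovR : ∀ e ∈ R, covered e := by
    intro e he
    rw [hR, Finset.mem_filter] at he
    exact hcov e.1 he.2 e (Finset.mem_filter.2 ⟨he.1, rfl⟩)
  set Astar : Finset (B × S) := R.sup De with hAstar
  have hAstar_tight : Astar ⊆ T ∧ vsum x Astar = gw E fj w Astar := by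
    rw [hAstar]
    refine Finset.sup_induction (p := fun A => A ⊆ T ∧ vsum x A = gw E fj w A) ?_ ?_ ?_
    · simp only [Finset.bot_eq_empty]
      constructor
      · exact Finset.empty_subset T
      · rw [gw_empty E fj w hfj hw]; simp [vsum]
    · intro a1 ha1 a2 ha2
      refine ⟨?_, ?_⟩
      · rw [Finset.sup_eq_union]
        exact Finset.union_subset ha1.1 ha2.1
      · rw [Finset.sup_eq_union]
        exact (htight_union a1 a2 ha1.1 ha2.1 ha1.2 ha2.2).2
    · intro e he
      have := hDe_tight (hcovR e he)
      exact ⟨this.1, this.2.1⟩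
  -- R is contained in Astar, and x vanishes on Astar \ R
  have hRA : R ⊆ Astar := by
    intro e he
    have h1 := hDe_tight (hcovR e he)
    rw [hAstar]
    exact (Finset.le_sup he : De e ≤ R.sup De) h1.2.2
  have hAR0 : ∀ e' ∈ Astar, e' ∉ R → x e' = 0 := by
    intro e' he' hne
    by_contra hxe'
    have hxe'pos : 0 < x e' := lt_of_le_of_ne (hx0 e') (fun h => hxe' h.symm)
    rw [hAstar, Finset.mem_sup] at he'
    obtain ⟨e, heR, he'De⟩ := he'
    have hcove := hcovR e heR
    have he'T : e' ∈ T := (hDe_tight hcove).1 he'De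
    have heT : e ∈ T := hRT heR
    have hstep : Step e.1 e'.1 := by
      rw [hStep]
      exact ⟨e, e', Finset.mem_filter.2 ⟨heT, rfl⟩, hcove, he'De,
        Finset.mem_filter.2 ⟨he'T, rfl⟩, hxe'pos⟩
    have hreach : Reach e.1 := (Finset.mem_filter.1 heR).2
    have hreach' : Reach e'.1 := by
      rw [hReach]
      obtain ⟨k₀, hk₀, hpath⟩ := hreach
      exact ⟨k₀, hk₀, hpath.tail hstep⟩
    exact hne (Finset.mem_filter.2 ⟨he'T, hreach'⟩)
  -- value of x on R
  have hxAR : vsum x Astar = vsum x R := by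
    have := vsum_sdiff x hRA
    have hz : vsum x (Astar \ R) = 0 := by
      apply Finset.sum_eq_zero
      intro e' he'
      rw [Finset.mem_sdiff] at he'
      exact hAR0 e' he'.1 he'.2
    linarith
  have hgwR : vsum x R = gw E fj w R := by
    have h1 : vsum x R ≤ gw E fj w R := hxgw R (Finset.mem_powerset.2 hRT)
    have h2 : gw E fj w R ≤ gw E fj w Astar := gw_mono E fj w hRA
    have h3 : vsum x Astar = gw E fj w Astar := hAstar_tight.2
    linarith
  -- saturation off Z
  have hsat : ∀ k ∈ X \ Z, vsum x (Tk k) = d k := by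
    intro k hk
    rw [Finset.mem_sdiff, hZ, Finset.mem_filter] at hk
    have hnr : ¬ Reach k := fun h => hk.2 ⟨hk.1, h⟩
    refine le_antisymm (hxcap k) ?_
    by_contra h
    push_neg at h
    exact hnr (by rw [hReach]; exact ⟨k, h, Relation.ReflTransGen.refl⟩)
  -- splitting the total value
  have hTsplit : vsum x T = vsum x R + ∑ k ∈ X \ Z, d k := by
    have h1 : vsum x (T \ R) + vsum x R = vsum x T := vsum_sdiff x hRT
    have h2 : vsum x (T \ R) = ∑ k ∈ X \ Z, d k := by
      rw [vsum_buyer_split x (T \ R)]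
      have hzero : ∀ k, k ∉ X \ Z → vsum x ((T \ R).filter (fun e => e.1 = k)) = 0 := by
        intro k hk
        have : (T \ R).filter (fun e => e.1 = k) = ∅ := by
          rw [Finset.filter_eq_empty_iff]
          intro e he hek
          rw [Finset.mem_sdiff] at he
          apply hk
          rw [Finset.mem_sdiff]
          have heX : e.1 ∈ X := by
            have := (mem_Ep E F i).1 (hT ▸ he.1)
            exact this.1.2
          refine ⟨hek ▸ heX, fun hkZ => ?_⟩
          rw [hZ, Finset.mem_filter] at hkZ
          exact he.2 (Finset.mem_filter.2 ⟨he.1, hek ▸ hkZ.2⟩)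
        rw [this]
        simp [vsum]
      have hsum0 : ∑ k : B, vsum x ((T \ R).filter (fun e => e.1 = k))
          = ∑ k ∈ X \ Z, vsum x ((T \ R).filter (fun e => e.1 = k)) := by
        symm
        apply Finset.sum_subset (Finset.subset_univ _)
        intro k _ hk
        exact hzero k hk
      rw [hsum0]
      apply Finset.sum_congr rfl
      intro k hk
      have hfeq : (T \ R).filter (fun e => e.1 = k) = Tk k := by
        ext e
        rw [Finset.mem_filter, Finset.mem_sdiff, hTk]
        simp only [Finset.mem_filter]
        constructor
        · rintro ⟨⟨h1', -⟩, h2'⟩; exact ⟨h1', h2'⟩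
        · rintro ⟨h1', h2'⟩
          refine ⟨⟨h1', fun hR' => ?_⟩, h2'⟩
          rw [hR, Finset.mem_filter] at hR'
          rw [Finset.mem_sdiff, hZ, Finset.mem_filter] at hk
          exact hk.2 ⟨hk.1, h2' ▸ hR'.2⟩
      rw [hfeq]
      exact hsat k hk
    linarith
  -- conclude
  have hcutle : cut E F fj w d i X ≤ vsum x T := by
    have h1 : cut E F fj w d i X ≤ gw E fj w (Ep E F i Z) + ∑ k ∈ X \ Z, d k :=
      cut_le E F fj w d i hZX
    rw [← hREp] at h1
    linarith [hgwR, hTsplit]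
  refine ⟨x, ?_, hcutle⟩
  apply memPwd_of_gw E fj w hfj hw d hx0
  · intro e he
    exact hxT e (fun hT' => he (hTE hT'))
  · intro A hA
    have h1 : vsum x A = vsum x (A ∩ T) := vsum_zero_off hxT A
    have h2 : vsum x (A ∩ T) ≤ gw E fj w (A ∩ T) :=
      hxgw _ (Finset.mem_powerset.2 Finset.inter_subset_right)
    have h3 : gw E fj w (A ∩ T) ≤ gw E fj w A := gw_mono E fj w Finset.inter_subset_left
    linarith
  · intro k
    have h1 : vsum x (Ei E k) = vsum x (Ei E k ∩ T) := vsum_zero_off hxT (Ei E k)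
    have h2 : Ei E k ∩ T = Tk k := by
      ext e
      rw [Finset.mem_inter, hTk]
      simp only [Finset.mem_filter, Ei]
      constructor
      · rintro ⟨⟨-, h⟩, hT'⟩; exact ⟨hT', h⟩
      · rintro ⟨hT', h⟩; exact ⟨⟨hTE hT', h⟩, hT'⟩
    rw [h1, h2]
    exact hxcap k

end Strong
section Assemble

variable {B S : Type*} [Fintype B] [Fintype S] [DecidableEq B] [DecidableEq S]

variable (E F : Finset (B × S)) (fj : S → Finset (B × S) → ℝ) (w : B × S → ℝ)
  (d : B → ℝ) (i : B)

lemma fwd_eq_cut (hfj : ∀ j : S, IsMonoSubmodular (Ej E j) (fj j)) (hw : memP E fj w)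
    (hd : ∀ k : B, 0 ≤ d k) (X : Finset B) :
    fwd E fj w d (Ep E F i X) = cut E F fj w d i X := by
  have hbdd : ∀ r ∈ {r : ℝ | ∃ x : B × S → ℝ, memPwd E fj w d x ∧ r = vsum x (Ep E F i X)},
      r ≤ cut E F fj w d i X := by
    rintro r ⟨x, hx, rfl⟩
    exact weak_duality E F fj w d i hw hx X
  apply le_antisymm
  · exact Real.sSup_le hbdd (cut_nonneg E F fj w d i hfj hw hd X)
  · obtain ⟨x, hx, hle⟩ := strong_duality E F fj w d i hfj hw hd X
    refine le_trans hle (le_csSup ⟨cut E F fj w d i X, fun r hr => hbdd r hr⟩ ⟨x, hx, rfl⟩)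

end Assemble
/-- for `F ⊆ E_i`, the function `X ↦ f_{w,d}(E_X \ (E_i \ F))`
is monotone submodular on `N`. -/
theorem fwd_restricted_monotone_submodular
    (E : Finset (B × S)) (fj : S → Finset (B × S) → ℝ)
    (hfj : ∀ j : S, IsMonoSubmodular (Ej E j) (fj j))
    (w : B × S → ℝ) (hw : memP E fj w)
    (d : B → ℝ) (hd : ∀ i : B, 0 ≤ d i)
    (i : B) (F : Finset (B × S)) (hF : F ⊆ Ei E i) :
    IsMonoSubmodularWeak (Finset.univ : Finset B)
      (fun X => fwd E fj w d (EX E X \ (Ei E i \ F))) := by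
  have hrw : ∀ X : Finset B, fwd E fj w d (EX E X \ (Ei E i \ F)) = cut E F fj w d i X :=
    fun X => fwd_eq_cut E F fj w d i hfj hw hd X
  constructor
  · intro A B' hAB _
    simp only [hrw]
    exact cut_mono E F fj w d i hd hAB
  · intro A B' _ _
    simp only [hrw]
    exact cut_submodular E F fj w d i hfj hd A B'

end TwoSidedMarket
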